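/- arXiv:1804.00154 — 4 statements merged into one kernel-verified Lean document; each statement's English description precedes it below -/
import Mathlib

section
/- Let y_0, ..., y_p ∈ R^n with x = y_0, p < n, and y_1 - x, ..., y_p - x linearly independent. Write L^T = Q̂ R̂ for the reduced QR factorization where Q̂ ∈ R^{n×p} has orthonormal columns spanning col(L^T), L being the matrix with rows (y_t - x)^T. Then the minimal norm solution (r, j) of the system r + j^T(y_t - x) = b_t (t = 0, ..., p) is given explicitly by (r, j) = diag(1, Q̂) · M^{-1} · b, where M is the (p+1)×(p+1) invertible matrix with block structure [[1, 0^T], [e, R̂^T]] and e ∈ R^p is the all-ones vector. -/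
open Matrix

/-- Euclidean norm of a finite real vector. -/
noncomputable def enorm {k : ℕ} (v : Fin k → ℝ) : ℝ := Real.sqrt (∑ i, v i ^ 2)

/-- explicit formula for the minimal-norm solution of the underdetermined
interpolation system via the reduced QR factorization `Lᵀ = Q̂ R̂`:
`(r, j) = diag(1, Q̂) · M⁻¹ · b` where `M = [[1, 0ᵀ], [e, R̂ᵀ]]` is invertible. -/
theorem minimal_norm_solution_QR_formula
    (n p : ℕ) (hp : p < n)
    (x : Fin n → ℝ) (ys : Fin p → (Fin n → ℝ))
    (hli : LinearIndependent ℝ (fun t : Fin p => ys t - x))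
    (Qhat : Matrix (Fin n) (Fin p) ℝ) (Rhat : Matrix (Fin p) (Fin p) ℝ)
    (horth : Qhatᵀ * Qhat = 1)
    (hspan : Submodule.span ℝ (Set.range (fun t : Fin p => ys t - x)) =
      Submodule.span ℝ (Set.range (fun s : Fin p => fun i : Fin n => Qhat i s)))
    (hQR : (Matrix.of fun t l => (ys t - x) l)ᵀ = Qhat * Rhat)
    (hupper : Rhat.BlockTriangular id)
    (hRinv : IsUnit Rhat.det)
    (b0 : ℝ) (bs : Fin p → ℝ)
    (r : ℝ) (j : Fin n → ℝ)
    (hsol0 : r = b0)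
    (hsolt : ∀ t, r + ∑ l, j l * (ys t l - x l) = bs t)
    (hmin : ∀ (r' : ℝ) (j' : Fin n → ℝ), r' = b0 →
      (∀ t, r' + ∑ l, j' l * (ys t l - x l) = bs t) →
      r ^ 2 + ∑ l, j l ^ 2 ≤ r' ^ 2 + ∑ l, j' l ^ 2)
    (M : Matrix (Fin 1 ⊕ Fin p) (Fin 1 ⊕ Fin p) ℝ)
    (hM : M = Matrix.fromBlocks 1 0 (Matrix.of fun _ _ => (1 : ℝ)) Rhatᵀ)
    (D : Matrix (Fin 1 ⊕ Fin n) (Fin 1 ⊕ Fin p) ℝ)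
    (hD : D = Matrix.fromBlocks 1 0 0 Qhat) :
    IsUnit M.det ∧
      Sum.elim (fun _ : Fin 1 => r) j =
        D.mulVec (M⁻¹.mulVec (Sum.elim (fun _ : Fin 1 => b0) bs)) := by
  subst hsol0 hM hD
  set L : Matrix (Fin p) (Fin n) ℝ := Matrix.of (fun t l => (ys t - x) l) with hL
  have hLfact : L = Rhatᵀ * Qhatᵀ := by
    have h := congrArg Matrix.transpose hQR
    simpa [Matrix.transpose_transpose, Matrix.transpose_mul] using h
  obtain ⟨c, hc⟩ : ∃ c : Fin p → ℝ, c = Qhatᵀ.mulVec j := ⟨_, rfl⟩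
  obtain ⟨jpar, hjpar⟩ : ∃ jp : Fin n → ℝ, jp = Qhat.mulVec c := ⟨_, rfl⟩
  have hQQ : ∀ v : Fin p → ℝ, Qhatᵀ.mulVec (Qhat.mulVec v) = v := by
    intro v
    rw [Matrix.mulVec_mulVec, horth, Matrix.one_mulVec]
  have hLj : L.mulVec j = Rhatᵀ.mulVec c := by
    rw [hLfact, ← Matrix.mulVec_mulVec, hc]
  have hLjpar : L.mulVec jpar = L.mulVec j := by
    rw [hLfact, ← Matrix.mulVec_mulVec, ← Matrix.mulVec_mulVec, hjpar, hQQ, hc]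
  -- dot products
  have hmv : ∀ (w : Fin n → ℝ), w ⬝ᵥ jpar = (Qhatᵀ.mulVec w) ⬝ᵥ c := by
    intro w
    rw [hjpar, Matrix.dotProduct_mulVec]
    congr 1
    rw [← Matrix.transpose_transpose Qhat, Matrix.vecMul_transpose, Matrix.transpose_transpose]
  have hjjpar : j ⬝ᵥ jpar = c ⬝ᵥ c := by rw [hmv j, ← hc]
  have hparpar : jpar ⬝ᵥ jpar = c ⬝ᵥ c := by
    rw [hmv jpar, hjpar, hQQ]
  -- jpar also solves the system
  have hsum : ∀ (w : Fin n → ℝ) t, ∑ l, w l * (ys t l - x l) = L.mulVec w t := by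
    intro w t
    simp [hL, Matrix.mulVec, dotProduct, mul_comm]
  have hsolt' : ∀ t, r + ∑ l, jpar l * (ys t l - x l) = bs t := by
    intro t
    rw [hsum, hLjpar, ← hsum]
    exact hsolt t
  have hle : ∑ l, j l ^ 2 ≤ ∑ l, jpar l ^ 2 := by
    have := hmin r jpar rfl hsolt'
    linarith
  -- j = jpar
  have expand : ∑ l, (j l - jpar l) ^ 2 + 2 * (j ⬝ᵥ jpar)
      = (∑ l, j l ^ 2) + ∑ l, jpar l ^ 2 := by
    simp only [dotProduct, Finset.mul_sum, ← Finset.sum_add_distrib]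
    exact Finset.sum_congr rfl fun l _ => by ring
  have hBpar : ∑ l, jpar l ^ 2 = jpar ⬝ᵥ jpar := by
    simp [dotProduct, sq]
  have hdiff : ∑ l, (j l - jpar l) ^ 2 ≤ 0 := by
    have h1 : j ⬝ᵥ jpar = jpar ⬝ᵥ jpar := by rw [hjjpar, hparpar]
    linarith [expand, hle, hBpar, h1]
  have hj : j = jpar := by
    have hzero : ∑ l, (j l - jpar l) ^ 2 = 0 :=
      le_antisymm hdiff (Finset.sum_nonneg fun l _ => sq_nonneg _)
    funext l
    have h := (Finset.sum_eq_zero_iff_of_nonneg (fun l _ => sq_nonneg (j l - jpar l))).mp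
      hzero l (Finset.mem_univ l)
    have h2 := pow_eq_zero_iff (n := 2) (by norm_num) |>.mp h
    linarith [sub_eq_zero.mp h2]
  -- determinant
  have hdet : IsUnit (Matrix.fromBlocks (1 : Matrix (Fin 1) (Fin 1) ℝ) 0
      (Matrix.of fun _ _ => (1 : ℝ)) Rhatᵀ).det := by
    rw [Matrix.det_fromBlocks_zero₁₂, Matrix.det_one, one_mul, Matrix.det_transpose]
    exact hRinv
  refine ⟨hdet, ?_⟩
  set M := Matrix.fromBlocks (1 : Matrix (Fin 1) (Fin 1) ℝ) 0
      (Matrix.of fun _ _ => (1 : ℝ)) Rhatᵀ with hM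
  have hMv : M.mulVec (Sum.elim (fun _ : Fin 1 => r) c) = Sum.elim (fun _ : Fin 1 => r) bs := by
    rw [hM, Matrix.fromBlocks_mulVec]
    simp only [Sum.elim_comp_inl, Sum.elim_comp_inr]
    funext i
    cases i with
    | inl i =>
      simp [Matrix.one_mulVec]
    | inr t =>
      have h1 : (Matrix.of fun (_ : Fin p) (_ : Fin 1) => (1 : ℝ)).mulVec
          (fun _ : Fin 1 => r) t = r := by
        simp [Matrix.mulVec, dotProduct]
      have h2 : Rhatᵀ.mulVec c t = ∑ l, j l * (ys t l - x l) := by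
        rw [← hLj, ← hsum]
      simp only [Sum.elim_inr, Pi.add_apply, h1, h2]
      exact hsolt t
  have hinv : M⁻¹.mulVec (Sum.elim (fun _ : Fin 1 => r) bs)
      = Sum.elim (fun _ : Fin 1 => r) c := by
    rw [← hMv, Matrix.mulVec_mulVec, Matrix.nonsing_inv_mul M hdet, Matrix.one_mulVec]
  rw [hinv, Matrix.fromBlocks_mulVec]
  simp only [Sum.elim_comp_inl, Sum.elim_comp_inr]
  funext i
  cases i with
  | inl i => simp [Matrix.one_mulVec]
  | inr l =>
    simp only [Sum.elim_inr, Pi.add_apply, Matrix.zero_mulVec, Pi.zero_apply, zero_add]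
    rw [hj, hjpar]
end

section
/- Let r, J solve the regression interpolation system: for each residual index i, (r_i, j_i) is the least-squares solution of W (r_i, j_i) = (f_i(y_0), ..., f_i(y_p)), where the rows of W are (1, (y_t - x)^T) and W has full column rank. Let Ŵ = W D with D = diag(1, Δ^{-1} I_n). If each residual function f_i is differentiable with Lipschitz continuous gradient (constant L_J for the combined map), and all y_t ∈ B(x, Δ), then ‖r(x) - r‖ ≤ (1/2) L_J √p ‖Ŵ^†‖ Δ² and ‖J(x) - J‖ ≤ (1/2) L_J √p ‖Ŵ^†‖ Δ, where r(x) is the true value vector and J(x) the true Jacobian at x = y_0. -/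
open Matrix

/-- Euclidean norm of a finite real vector. -/
noncomputable def enorm' {k : ℕ} (v : Fin k → ℝ) : ℝ := Real.sqrt (∑ i, v i ^ 2)

lemma enorm'_nonneg {k : ℕ} (v : Fin k → ℝ) : 0 ≤ enorm' v := Real.sqrt_nonneg _

lemma sq_enorm' {k : ℕ} (v : Fin k → ℝ) : enorm' v ^ 2 = ∑ i, v i ^ 2 :=
  Real.sq_sqrt (Finset.sum_nonneg fun i _ => sq_nonneg _)

lemma enorm'_le_iff {k : ℕ} {v : Fin k → ℝ} {c : ℝ} (hc : 0 ≤ c) :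
    enorm' v ≤ c ↔ ∑ i, v i ^ 2 ≤ c ^ 2 := by
  rw [enorm']
  constructor
  · intro h
    have := Real.sq_sqrt (Finset.sum_nonneg fun i (_ : i ∈ Finset.univ) => sq_nonneg (v i))
    calc ∑ i, v i ^ 2 = (Real.sqrt (∑ i, v i ^ 2)) ^ 2 := this.symm
      _ ≤ c ^ 2 := by apply pow_le_pow_left₀ (Real.sqrt_nonneg _) h
  · intro h
    calc Real.sqrt (∑ i, v i ^ 2) ≤ Real.sqrt (c ^ 2) := Real.sqrt_le_sqrt h
      _ = c := by rw [Real.sqrt_sq hc]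

lemma enorm'_smul {k : ℕ} (s : ℝ) (hs : 0 ≤ s) (v : Fin k → ℝ) :
    enorm' (s • v) = s * enorm' v := by
  simp only [enorm', Pi.smul_apply, smul_eq_mul, mul_pow, ← Finset.mul_sum]
  rw [Real.sqrt_mul (by positivity), Real.sqrt_sq hs]

lemma enorm'_eq_norm {k : ℕ} (v : Fin k → ℝ) :
    enorm' v = ‖(EuclideanSpace.equiv (Fin k) ℝ).symm v‖ := by
  rw [EuclideanSpace.norm_eq, enorm']
  congr 1
  apply Finset.sum_congr rfl
  intro i _
  rw [Real.norm_eq_abs, sq_abs]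
  rfl

lemma taylor_err {n m : ℕ}
    (rfun : (Fin n → ℝ) → (Fin m → ℝ))
    (Jfun : (Fin n → ℝ) → Matrix (Fin m) (Fin n) ℝ)
    (x : Fin n → ℝ) (Δ : ℝ) (LJ : ℝ) (hLJ : 0 ≤ LJ)
    (hderiv : ∀ u, enorm' (u - x) ≤ Δ →
      HasFDerivAt rfun (LinearMap.toContinuousLinearMap ((Jfun u).mulVecLin)) u)
    (hLip : ∀ u, enorm' (u - x) ≤ Δ → ∀ v, enorm' (v - x) ≤ Δ →
      ∀ w : Fin n → ℝ,
        enorm' ((Jfun u - Jfun v).mulVec w) ≤ LJ * enorm' (u - v) * enorm' w)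
    (u : Fin n → ℝ) (hu : enorm' (u - x) ≤ Δ) (hΔ : 0 ≤ Δ) :
    enorm' (fun i => rfun u i - rfun x i - ∑ l, Jfun x i l * (u l - x l)) ≤ LJ / 2 * Δ ^ 2 := by
  set v : Fin n → ℝ := u - x with hv
  have hmem : ∀ s : ℝ, 0 ≤ s → s ≤ 1 → enorm' ((x + s • v) - x) ≤ Δ := by
    intro s h0 h1
    have : (x + s • v) - x = s • v := add_sub_cancel_left x (s • v)
    rw [this, enorm'_smul s h0]
    calc s * enorm' v ≤ 1 * enorm' v := by
          apply mul_le_mul_of_nonneg_right h1 (enorm'_nonneg _)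
      _ = enorm' v := one_mul _
      _ ≤ Δ := hu
  set e := EuclideanSpace.equiv (Fin m) ℝ with he
  set F : ℝ → EuclideanSpace ℝ (Fin m) :=
    fun s => e.symm (rfun (x + s • v) - rfun x - s • (Jfun x).mulVec v) with hF
  set F' : ℝ → EuclideanSpace ℝ (Fin m) :=
    fun s => e.symm ((Jfun (x + s • v) - Jfun x).mulVec v) with hF'
  have hFd : ∀ s ∈ Set.Icc (0:ℝ) 1, HasDerivAt F (F' s) s := by
    intro s hs
    have h1 : HasDerivAt (fun s : ℝ => x + s • v) v s := by
      have := ((hasDerivAt_id s).smul_const v).const_add x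
      simpa using this
    have h2 := (hderiv (x + s • v) (hmem s hs.1 hs.2)).comp_hasDerivAt s h1
    have h3 : HasDerivAt (fun s : ℝ => rfun (x + s • v) - rfun x - s • (Jfun x).mulVec v)
        ((Jfun (x + s • v)).mulVec v - (Jfun x).mulVec v) s := by
      have h4 : HasDerivAt (fun s : ℝ => s • (Jfun x).mulVec v) ((Jfun x).mulVec v) s := by
        have := (hasDerivAt_id s).smul_const ((Jfun x).mulVec v)
        simpa using this
      have := (h2.sub_const (rfun x)).sub h4
      exact this
    have := (e.symm : (Fin m → ℝ) →L[ℝ] EuclideanSpace ℝ (Fin m)).hasFDerivAt.comp_hasDerivAt s h3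
    simp only [hF, hF']
    convert this using 1
    all_goals try rfl
    simp [Matrix.sub_mulVec]
  have hcont : ContinuousOn F (Set.Icc 0 1) := fun s hs =>
    (hFd s hs).continuousAt.continuousWithinAt
  have hFd' : ∀ s ∈ Set.Ico (0:ℝ) 1, HasDerivWithinAt F (F' s) (Set.Ici s) s := fun s hs =>
    ((hFd s (Set.mem_Icc_of_Ico hs)).hasDerivWithinAt)
  have ha : ‖F 0‖ ≤ LJ / 2 * enorm' v ^ 2 * (0:ℝ) ^ 2 := by simp [hF]
  have hB : ∀ s : ℝ, HasDerivAt (fun s => LJ / 2 * enorm' v ^ 2 * s ^ 2)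
      (LJ * enorm' v ^ 2 * s) s := by
    intro s
    have := (hasDerivAt_pow 2 s).const_mul (LJ / 2 * enorm' v ^ 2)
    convert this using 1
    all_goals try rfl
    push_cast
    ring
  have bound : ∀ s ∈ Set.Ico (0:ℝ) 1, ‖F' s‖ ≤ LJ * enorm' v ^ 2 * s := by
    intro s hs
    have hb := hLip (x + s • v) (hmem s hs.1 hs.2.le) x (by simp [enorm']; positivity) v
    have hxx : (x + s • v) - x = s • v := add_sub_cancel_left x (s • v)
    rw [hxx, enorm'_smul s hs.1] at hb
    calc ‖F' s‖ = enorm' ((Jfun (x + s • v) - Jfun x).mulVec v) := (enorm'_eq_norm _).symm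
      _ ≤ LJ * (s * enorm' v) * enorm' v := hb
      _ = LJ * enorm' v ^ 2 * s := by ring
  have key : ‖F 1‖ ≤ LJ / 2 * enorm' v ^ 2 * (1:ℝ) ^ 2 :=
    image_norm_le_of_norm_deriv_right_le_deriv_boundary hcont hFd' ha hB bound
      (Set.right_mem_Icc.2 zero_le_one)
  have hF1 : ‖F 1‖ = enorm' (fun i => rfun u i - rfun x i - ∑ l, Jfun x i l * (u l - x l)) := by
    rw [← enorm'_eq_norm]
    have hxu : x + (1:ℝ) • v = u := by simp [hv]
    simp only [hF, hxu]
    congr 1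
    funext i
    simp [Matrix.mulVec, dotProduct, hv]
  rw [hF1] at key
  calc enorm' _ ≤ LJ / 2 * enorm' v ^ 2 * 1 ^ 2 := key
    _ = LJ / 2 * enorm' v ^ 2 := by ring
    _ ≤ LJ / 2 * Δ ^ 2 := by
        apply mul_le_mul_of_nonneg_left _ (by linarith)
        exact pow_le_pow_left₀ (enorm'_nonneg _) hu 2

lemma ls_orth {N : ℕ} (q c : Fin N → ℝ)
    (h : ∀ s : ℝ, ∑ t, q t ^ 2 ≤ ∑ t, (q t + s * c t) ^ 2) :
    ∑ t, q t * c t = 0 := by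
  have h2 : ∀ s : ℝ, 0 ≤ (∑ t, c t ^ 2) * (s * s) + (2 * ∑ t, q t * c t) * s + 0 := by
    intro s
    have h3 := h s
    have expand : ∑ t, (q t + s * c t) ^ 2
        = ∑ t, q t ^ 2 + ((∑ t, c t ^ 2) * (s * s) + (2 * ∑ t, q t * c t) * s) := by
      simp only [Finset.mul_sum, Finset.sum_mul, ← Finset.sum_add_distrib]
      apply Finset.sum_congr rfl
      intro t _
      ring
    rw [expand] at h3
    linarith
  have h4 := discrim_le_zero h2
  rw [discrim] at h4
  nlinarith [h4]

/-- error bounds for the regression interpolation model: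
`‖r(x) - r_k‖ ≤ ½ L_J √p ‖Ŵ†‖ Δ²` and `‖J(x) - J_k‖ ≤ ½ L_J √p ‖Ŵ†‖ Δ`,
where `Ŵ† = (ŴᵀŴ)⁻¹Ŵᵀ` (full column rank pseudoinverse), `Cdag` being an operator-norm
bound for `Ŵ†`, and the Jacobian error is stated in operator-norm (pointwise) form. -/
theorem regression_model_error_bounds
    (n p m : ℕ) (hpn : n ≤ p)
    (rfun : (Fin n → ℝ) → (Fin m → ℝ))
    (Jfun : (Fin n → ℝ) → Matrix (Fin m) (Fin n) ℝ)
    (x : Fin n → ℝ) (Δ : ℝ) (hΔ : 0 < Δ)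
    (LJ : ℝ) (hLJ : 0 ≤ LJ)
    (hderiv : ∀ u, enorm' (u - x) ≤ Δ →
      HasFDerivAt rfun (LinearMap.toContinuousLinearMap ((Jfun u).mulVecLin)) u)
    (hLip : ∀ u, enorm' (u - x) ≤ Δ → ∀ v, enorm' (v - x) ≤ Δ →
      ∀ w : Fin n → ℝ,
        enorm' ((Jfun u - Jfun v).mulVec w) ≤ LJ * enorm' (u - v) * enorm' w)
    (y : Fin (p + 1) → (Fin n → ℝ)) (hy0 : y 0 = x)
    (hball : ∀ t, enorm' (y t - x) ≤ Δ)
    (W : Matrix (Fin (p + 1)) (Fin (n + 1)) ℝ)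
    (hW : ∀ t, W t = Fin.cons 1 (fun l => y t l - x l))
    (hrank : W.rank = n + 1)
    (z : Fin m → Fin (n + 1) → ℝ)
    (hls : ∀ i, ∀ z' : Fin (n + 1) → ℝ,
      ∑ t, (z i 0 + (∑ l : Fin n, z i l.succ * (y t l - x l)) - rfun (y t) i) ^ 2 ≤
        ∑ t, (z' 0 + (∑ l : Fin n, z' l.succ * (y t l - x l)) - rfun (y t) i) ^ 2)
    (D : Matrix (Fin (n + 1)) (Fin (n + 1)) ℝ)
    (hD : D = Matrix.diagonal (Fin.cons 1 (fun _ : Fin n => Δ⁻¹)))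
    (What : Matrix (Fin (p + 1)) (Fin (n + 1)) ℝ) (hWhat : What = W * D)
    (Cdag : ℝ)
    (hCdag : ∀ v : Fin (p + 1) → ℝ,
      enorm' (((Whatᵀ * What)⁻¹ * Whatᵀ).mulVec v) ≤ Cdag * enorm' v) :
    enorm' (fun i => rfun x i - z i 0) ≤ 1 / 2 * LJ * Real.sqrt p * Cdag * Δ ^ 2 ∧
      ∀ w : Fin n → ℝ,
        enorm' (fun i => (Jfun x).mulVec w i - ∑ l : Fin n, z i l.succ * w l) ≤
          1 / 2 * LJ * Real.sqrt p * Cdag * Δ * enorm' w := by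
  classical
  -- Cdag is nonnegative
  have hCnn : 0 ≤ Cdag := by
    have h1 := hCdag (Pi.single 0 1)
    have h2 : enorm' (Pi.single (0 : Fin (p + 1)) (1 : ℝ)) = 1 := by
      simp only [enorm', Pi.single_apply]
      rw [Finset.sum_congr rfl (fun t _ => by
        rw [show ((if t = (0 : Fin (p+1)) then (1:ℝ) else 0)) ^ 2
          = if t = (0 : Fin (p+1)) then (1:ℝ) else 0 from by split <;> norm_num]),
        Finset.sum_ite_eq']
      simp
    rw [h2, mul_one] at h1
    exact le_trans (enorm'_nonneg _) h1
  -- the "g", "a", "E" vectors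
  set g : Fin m → Fin (p + 1) → ℝ := fun i t => rfun (y t) i with hg
  set a : Fin m → Fin (n + 1) → ℝ := fun i => Fin.cons (rfun x i) (fun l => Jfun x i l) with hadef
  set E : Fin m → Fin (p + 1) → ℝ :=
    fun i t => rfun (y t) i - rfun x i - ∑ l, Jfun x i l * (y t l - x l) with hEdef
  -- mulVec of W in concrete form
  have hWm : ∀ c : Fin (n + 1) → ℝ, ∀ t,
      W.mulVec c t = c 0 + ∑ l : Fin n, c l.succ * (y t l - x l) := by
    intro c t
    show ∑ k, W t k * c k = _
    rw [hW t, Fin.sum_univ_succ]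
    simp only [Fin.cons_zero, Fin.cons_succ, one_mul]
    congr 1
    exact Finset.sum_congr rfl fun l _ => mul_comm _ _
  -- least squares in mulVec form
  have hls' : ∀ i, ∀ c : Fin (n + 1) → ℝ,
      ∑ t, (W.mulVec (z i) t - g i t) ^ 2 ≤ ∑ t, (W.mulVec c t - g i t) ^ 2 := by
    intro i c
    calc ∑ t, (W.mulVec (z i) t - g i t) ^ 2
        = ∑ t, (z i 0 + (∑ l : Fin n, z i l.succ * (y t l - x l)) - rfun (y t) i) ^ 2 :=
          Finset.sum_congr rfl fun t _ => by rw [hWm]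
      _ ≤ ∑ t, (c 0 + (∑ l : Fin n, c l.succ * (y t l - x l)) - rfun (y t) i) ^ 2 := hls i c
      _ = ∑ t, (W.mulVec c t - g i t) ^ 2 :=
          Finset.sum_congr rfl fun t _ => by rw [hWm]
  -- orthogonality of residual to column space
  have horth : ∀ i, ∀ c : Fin (n + 1) → ℝ,
      ∑ t, (W.mulVec (z i) t - g i t) * W.mulVec c t = 0 := by
    intro i c
    apply ls_orth
    intro s
    calc ∑ t, (W.mulVec (z i) t - g i t) ^ 2
        ≤ ∑ t, (W.mulVec (z i + s • c) t - g i t) ^ 2 := hls' i (z i + s • c)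
      _ = ∑ t, (W.mulVec (z i) t - g i t + s * W.mulVec c t) ^ 2 := by
          apply Finset.sum_congr rfl
          intro t _
          rw [Matrix.mulVec_add, Matrix.mulVec_smul]
          simp only [Pi.add_apply, Pi.smul_apply, smul_eq_mul]
          ring
  -- normal equations
  have hNE : ∀ i, Wᵀ.mulVec (fun t => W.mulVec (z i) t - g i t) = 0 := by
    intro i
    funext j
    have hWj : ∀ t, W.mulVec (Pi.single j (1:ℝ)) t = W t j := by
      intro t
      simp [Matrix.mulVec, dotProduct, Pi.single_apply, mul_ite]
    have h1 := horth i (Pi.single j (1:ℝ))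
    rw [Finset.sum_congr rfl (fun t _ => by rw [hWj t])] at h1
    show ∑ t, Wᵀ j t * (W.mulVec (z i) t - g i t) = 0
    rw [← h1]
    exact Finset.sum_congr rfl fun t _ => by rw [Matrix.transpose_apply]; ring
  -- trivial kernel of W
  have hker : ∀ v : Fin (n + 1) → ℝ, W.mulVec v = 0 → v = 0 := by
    intro v hv
    have h1 : Module.finrank ℝ (LinearMap.range W.mulVecLin) = n + 1 := hrank
    have h2 := LinearMap.finrank_range_add_finrank_ker W.mulVecLin
    rw [h1] at h2
    have h3 : Module.finrank ℝ (Fin (n + 1) → ℝ) = n + 1 := by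
      simp [Module.finrank_pi]
    rw [h3] at h2
    have h4 : Module.finrank ℝ (LinearMap.ker W.mulVecLin) = 0 := by omega
    have h5 : LinearMap.ker W.mulVecLin = ⊥ := Submodule.finrank_eq_zero.mp h4
    have h6 : v ∈ LinearMap.ker W.mulVecLin := by
      simpa [Matrix.mulVecLin_apply] using hv
    rw [h5] at h6
    simpa using h6
  -- invertibility of WᵀW
  have hdetWW : IsUnit (Wᵀ * W).det := by
    rw [isUnit_iff_ne_zero]
    intro h0
    obtain ⟨v, hv0, hv⟩ := (Matrix.exists_mulVec_eq_zero_iff).2 h0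
    apply hv0
    apply hker
    have h1 : dotProduct (W.mulVec v) (W.mulVec v) = 0 := by
      have h2 : dotProduct v ((Wᵀ * W).mulVec v) = 0 := by rw [hv]; simp
      rwa [← Matrix.mulVec_mulVec, Matrix.dotProduct_mulVec, Matrix.vecMul_transpose] at h2
    exact dotProduct_self_eq_zero.1 h1
  -- the inverse scaling matrix
  set Dinv : Matrix (Fin (n + 1)) (Fin (n + 1)) ℝ :=
    Matrix.diagonal (Fin.cons (1:ℝ) (fun _ : Fin n => Δ)) with hDinvdef
  have hDDinv : D * Dinv = 1 := by
    rw [hD, hDinvdef, Matrix.diagonal_mul_diagonal]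
    ext i j
    rcases eq_or_ne i j with rfl | hij
    · rw [Matrix.diagonal_apply_eq, Matrix.one_apply_eq]
      refine Fin.cases ?_ ?_ i
      · simp
      · intro l
        simp [inv_mul_cancel₀ hΔ.ne']
    · rw [Matrix.diagonal_apply_ne _ hij, Matrix.one_apply_ne hij]
  have hDinvD : Dinv * D = 1 := by
    rw [hD, hDinvdef, Matrix.diagonal_mul_diagonal]
    ext i j
    rcases eq_or_ne i j with rfl | hij
    · rw [Matrix.diagonal_apply_eq, Matrix.one_apply_eq]
      refine Fin.cases ?_ ?_ i
      · simp
      · intro l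
        simp [mul_inv_cancel₀ hΔ.ne']
    · rw [Matrix.diagonal_apply_ne _ hij, Matrix.one_apply_ne hij]
  have hDT : Dᵀ = D := by rw [hD, Matrix.diagonal_transpose]
  -- pseudoinverse identity
  have hWhatT : Whatᵀ = D * Wᵀ := by rw [hWhat, Matrix.transpose_mul, hDT]
  have hWhatWhat : Whatᵀ * What = D * (Wᵀ * W) * D := by
    rw [hWhatT, hWhat]
    simp only [Matrix.mul_assoc]
  have hMid : (Whatᵀ * What)⁻¹ * Whatᵀ = Dinv * ((Wᵀ * W)⁻¹ * Wᵀ) := by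
    have hinv : (Whatᵀ * What)⁻¹ = Dinv * (Wᵀ * W)⁻¹ * Dinv := by
      apply Matrix.inv_eq_right_inv
      rw [hWhatWhat]
      calc D * (Wᵀ * W) * D * (Dinv * (Wᵀ * W)⁻¹ * Dinv)
          = D * ((Wᵀ * W) * ((D * Dinv) * ((Wᵀ * W)⁻¹ * Dinv))) := by
            simp only [Matrix.mul_assoc]
        _ = D * ((Wᵀ * W) * ((Wᵀ * W)⁻¹ * Dinv)) := by rw [hDDinv, Matrix.one_mul]
        _ = D * ((Wᵀ * W) * (Wᵀ * W)⁻¹ * Dinv) := by rw [Matrix.mul_assoc (Wᵀ * W)]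
        _ = D * Dinv := by rw [Matrix.mul_nonsing_inv _ hdetWW, Matrix.one_mul]
        _ = 1 := hDDinv
    rw [hinv, hWhatT]
    calc Dinv * (Wᵀ * W)⁻¹ * Dinv * (D * Wᵀ)
        = Dinv * ((Wᵀ * W)⁻¹ * ((Dinv * D) * Wᵀ)) := by simp only [Matrix.mul_assoc]
      _ = Dinv * ((Wᵀ * W)⁻¹ * Wᵀ) := by rw [hDinvD, Matrix.one_mul]
  -- E agrees with the residual of the true coefficients
  have hEa : ∀ i, E i = fun t => g i t - W.mulVec (a i) t := by
    intro i
    funext t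
    rw [hWm]
    simp only [hEdef, hg, hadef, Fin.cons_zero, Fin.cons_succ]
    ring
  -- the key vector identity
  have hkey : ∀ i, ((Whatᵀ * What)⁻¹ * Whatᵀ).mulVec (E i) = Dinv.mulVec (z i - a i) := by
    intro i
    have h1 : Wᵀ.mulVec (E i) = (Wᵀ * W).mulVec (z i - a i) := by
      have h2 : E i = (W.mulVec (z i) - W.mulVec (a i)) - fun t => W.mulVec (z i) t - g i t := by
        rw [hEa i]
        funext t
        simp only [Pi.sub_apply]
        ring
      rw [h2, Matrix.mulVec_sub, hNE i, sub_zero, ← Matrix.mulVec_sub, ← Matrix.mulVec_mulVec]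
    calc ((Whatᵀ * What)⁻¹ * Whatᵀ).mulVec (E i)
        = (Dinv * ((Wᵀ * W)⁻¹ * Wᵀ)).mulVec (E i) := by rw [hMid]
      _ = Dinv.mulVec (((Wᵀ * W)⁻¹).mulVec (Wᵀ.mulVec (E i))) := by
          simp only [Matrix.mulVec_mulVec, Matrix.mul_assoc]
      _ = Dinv.mulVec (((Wᵀ * W)⁻¹ * (Wᵀ * W)).mulVec (z i - a i)) := by
          rw [h1]
          simp only [Matrix.mulVec_mulVec, Matrix.mul_assoc]
      _ = Dinv.mulVec (z i - a i) := by rw [Matrix.nonsing_inv_mul _ hdetWW, Matrix.one_mulVec]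
  -- main per-i estimate
  have hDineq : ∀ i, enorm' (Dinv.mulVec (z i - a i)) ≤ Cdag * enorm' (E i) := by
    intro i
    rw [← hkey i]
    exact hCdag (E i)
  -- Taylor bounds per sample point
  have hc0 : (0:ℝ) ≤ LJ / 2 * Δ ^ 2 := by positivity
  have hEt : ∀ t, ∑ i, E i t ^ 2 ≤ (LJ / 2 * Δ ^ 2) ^ 2 := by
    intro t
    have h1 := taylor_err rfun Jfun x Δ LJ hLJ hderiv hLip (y t) (hball t) hΔ.le
    exact (enorm'_le_iff hc0).1 h1
  have hE0 : ∀ i, E i 0 = 0 := by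
    intro i
    simp [hEdef, hy0]
  have hsum : ∑ t, ∑ i, E i t ^ 2 ≤ p * (LJ / 2 * Δ ^ 2) ^ 2 := by
    rw [Fin.sum_univ_succ]
    have h0 : ∑ i, E i 0 ^ 2 = 0 := by simp [hE0]
    rw [h0, zero_add]
    calc ∑ t : Fin p, ∑ i, E i t.succ ^ 2 ≤ ∑ _t : Fin p, (LJ / 2 * Δ ^ 2) ^ 2 :=
          Finset.sum_le_sum fun t _ => hEt t.succ
      _ = p * (LJ / 2 * Δ ^ 2) ^ 2 := by
          rw [Finset.sum_const, Finset.card_univ, Fintype.card_fin, nsmul_eq_mul]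
  -- squared per-i estimate
  have hsq : ∀ i, ∑ k, ((Fin.cons (1:ℝ) (fun _ : Fin n => Δ) : Fin (n + 1) → ℝ) k * (z i k - a i k)) ^ 2 ≤
      Cdag ^ 2 * ∑ t, E i t ^ 2 := by
    intro i
    have h1 := hDineq i
    have h2 : (0:ℝ) ≤ Cdag * enorm' (E i) := mul_nonneg hCnn (enorm'_nonneg _)
    have h3 := (enorm'_le_iff h2).1 h1
    calc ∑ k, ((Fin.cons (1:ℝ) (fun _ : Fin n => Δ) : Fin (n + 1) → ℝ) k * (z i k - a i k)) ^ 2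
        = ∑ k, Dinv.mulVec (z i - a i) k ^ 2 := by
          apply Finset.sum_congr rfl
          intro k _
          rw [hDinvdef, Matrix.mulVec_diagonal]
          simp [Pi.sub_apply]
      _ ≤ (Cdag * enorm' (E i)) ^ 2 := h3
      _ = Cdag ^ 2 * ∑ t, E i t ^ 2 := by rw [mul_pow, sq_enorm']
  have hswap : ∑ i, ∑ t, E i t ^ 2 ≤ p * (LJ / 2 * Δ ^ 2) ^ 2 := by
    rw [Finset.sum_comm]
    exact hsum
  have hsqp : Real.sqrt p ^ 2 = p := Real.sq_sqrt (Nat.cast_nonneg p)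
  constructor
  · -- value bound
    have hrhs : (0:ℝ) ≤ 1 / 2 * LJ * Real.sqrt p * Cdag * Δ ^ 2 := by positivity
    rw [enorm'_le_iff hrhs]
    calc ∑ i, (rfun x i - z i 0) ^ 2
        ≤ ∑ i, ∑ k, ((Fin.cons (1:ℝ) (fun _ : Fin n => Δ) : Fin (n + 1) → ℝ) k * (z i k - a i k)) ^ 2 := by
          apply Finset.sum_le_sum
          intro i _
          have h1 : (rfun x i - z i 0) ^ 2
              = ((Fin.cons (1:ℝ) (fun _ : Fin n => Δ) : Fin (n + 1) → ℝ) 0 * (z i 0 - a i 0)) ^ 2 := by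
            simp only [hadef, Fin.cons_zero, one_mul]
            ring
          rw [h1]
          exact Finset.single_le_sum
            (f := fun k => ((Fin.cons (1:ℝ) (fun _ : Fin n => Δ) : Fin (n + 1) → ℝ) k *
              (z i k - a i k)) ^ 2) (fun k _ => sq_nonneg _) (Finset.mem_univ 0)
      _ ≤ ∑ i, Cdag ^ 2 * ∑ t, E i t ^ 2 := Finset.sum_le_sum fun i _ => hsq i
      _ = Cdag ^ 2 * ∑ i, ∑ t, E i t ^ 2 := by rw [Finset.mul_sum]
      _ ≤ Cdag ^ 2 * (p * (LJ / 2 * Δ ^ 2) ^ 2) := by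
          apply mul_le_mul_of_nonneg_left hswap (sq_nonneg _)
      _ = (1 / 2 * LJ * Real.sqrt p * Cdag * Δ ^ 2) ^ 2 := by
          rw [show (1 / 2 * LJ * Real.sqrt p * Cdag * Δ ^ 2) ^ 2
            = Real.sqrt p ^ 2 * ((1/2 * LJ) ^ 2 * Cdag ^ 2 * Δ ^ 4) from by ring, hsqp]
          ring
  · -- Jacobian bound
    intro w
    have hrhs : (0:ℝ) ≤ 1 / 2 * LJ * Real.sqrt p * Cdag * Δ * enorm' w := by
      have := enorm'_nonneg w
      positivity
    rw [enorm'_le_iff hrhs]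
    have hCS : ∀ i, ((Jfun x).mulVec w i - ∑ l : Fin n, z i l.succ * w l) ^ 2 ≤
        (∑ l : Fin n, (Jfun x i l - z i l.succ) ^ 2) * ∑ l : Fin n, w l ^ 2 := by
      intro i
      have h1 : (Jfun x).mulVec w i - ∑ l : Fin n, z i l.succ * w l
          = ∑ l : Fin n, (Jfun x i l - z i l.succ) * w l := by
        show (∑ l, Jfun x i l * w l) - _ = _
        rw [← Finset.sum_sub_distrib]
        apply Finset.sum_congr rfl
        intro l _
        ring
      rw [h1]
      exact Finset.sum_mul_sq_le_sq_mul_sq _ _ _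
    have hrow : ∀ i, ∑ l : Fin n, (Jfun x i l - z i l.succ) ^ 2 ≤
        Δ⁻¹ ^ 2 * (Cdag ^ 2 * ∑ t, E i t ^ 2) := by
      intro i
      have h1 : ∑ l : Fin n, (Jfun x i l - z i l.succ) ^ 2
          = Δ⁻¹ ^ 2 * ∑ l : Fin n,
              ((Fin.cons (1:ℝ) (fun _ : Fin n => Δ) : Fin (n + 1) → ℝ) l.succ * (z i l.succ - a i l.succ)) ^ 2 := by
        rw [Finset.mul_sum]
        apply Finset.sum_congr rfl
        intro l _
        simp only [hadef, Fin.cons_succ]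
        field_simp
        ring
      rw [h1]
      apply mul_le_mul_of_nonneg_left _ (sq_nonneg _)
      calc ∑ l : Fin n, ((Fin.cons (1:ℝ) (fun _ : Fin n => Δ) : Fin (n + 1) → ℝ) l.succ * (z i l.succ - a i l.succ)) ^ 2
          ≤ ∑ k, ((Fin.cons (1:ℝ) (fun _ : Fin n => Δ) : Fin (n + 1) → ℝ) k * (z i k - a i k)) ^ 2 := by
            rw [Fin.sum_univ_succ]
            have := sq_nonneg ((Fin.cons (1:ℝ) (fun _ : Fin n => Δ) : Fin (n + 1) → ℝ) 0 * (z i 0 - a i 0))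
            linarith
        _ ≤ Cdag ^ 2 * ∑ t, E i t ^ 2 := hsq i
    calc ∑ i, ((Jfun x).mulVec w i - ∑ l : Fin n, z i l.succ * w l) ^ 2
        ≤ ∑ i, (Δ⁻¹ ^ 2 * (Cdag ^ 2 * ∑ t, E i t ^ 2)) * ∑ l : Fin n, w l ^ 2 := by
          apply Finset.sum_le_sum
          intro i _
          exact le_trans (hCS i) (mul_le_mul_of_nonneg_right (hrow i)
            (Finset.sum_nonneg fun l _ => sq_nonneg _))
      _ = Δ⁻¹ ^ 2 * Cdag ^ 2 * (∑ l : Fin n, w l ^ 2) * ∑ i, ∑ t, E i t ^ 2 := by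
          rw [Finset.mul_sum]
          apply Finset.sum_congr rfl
          intro i _
          ring
      _ ≤ Δ⁻¹ ^ 2 * Cdag ^ 2 * (∑ l : Fin n, w l ^ 2) * (p * (LJ / 2 * Δ ^ 2) ^ 2) := by
          apply mul_le_mul_of_nonneg_left hswap
          have : (0:ℝ) ≤ ∑ l : Fin n, w l ^ 2 := Finset.sum_nonneg fun l _ => sq_nonneg _
          positivity
      _ = (1 / 2 * LJ * Real.sqrt p * Cdag * Δ * enorm' w) ^ 2 := by
          rw [show (1 / 2 * LJ * Real.sqrt p * Cdag * Δ * enorm' w) ^ 2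
            = Real.sqrt p ^ 2 * ((1/2*LJ) ^ 2 * Cdag ^ 2 * Δ ^ 2 * enorm' w ^ 2) from by ring,
            hsqp, sq_enorm']
          field_simp
end

section
/- Suppose a trust-region step s_k satisfies the Cauchy decrease condition m_k(0) - m_k(s_k) ≥ c_1 ‖g_k‖ min(Δ_k, ‖g_k‖ / max(‖H_k‖, 1)) with c_1 ∈ [1/2, 1], and suppose m_k is fully linear for f on B(x_k, Δ_k) with constants κ_ef, κ_eg. If ‖g_k‖ ≥ max(κ_H, 1) Δ_k (where ‖H_k‖ ≤ κ_H) and Δ_k ≤ c_1(1 - η_2)‖g_k‖ / (2 κ_ef), then the ratio ρ_k = (f(x_k) - f(x_k + s_k)) / (m_k(0) - m_k(s_k)) satisfies ρ_k ≥ η_2, i.e., the iteration is very successful. -/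
open Matrix

/-- Euclidean norm of a finite real vector. -/
noncomputable def eucNorm {k : ℕ} (v : Fin k → ℝ) : ℝ := Real.sqrt (∑ i, v i ^ 2)

/-- the "very successful iteration" lemma: under Cauchy decrease,
full linearity, `‖g_k‖ ≥ max(κ_H, 1) Δ_k` and `Δ_k ≤ c₁(1-η₂)‖g_k‖/(2κ_ef)`,
the trust-region ratio satisfies `ρ_k ≥ η₂`. Here `nH = ‖H_k‖ ≤ κ_H`. -/
theorem very_successful_iteration
    (n : ℕ)
    (f : (Fin n → ℝ) → ℝ) (xk gk sk : Fin n → ℝ)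
    (Hk : Matrix (Fin n) (Fin n) ℝ)
    (mk : (Fin n → ℝ) → ℝ)
    (hmk : ∀ s, mk s = f xk + (∑ l, gk l * s l) +
      (1 / 2) * ∑ l, s l * Hk.mulVec s l)
    (c1 η2 κef κeg Δk κH nH : ℝ)
    (hc1 : 1 / 2 ≤ c1) (hc1' : c1 ≤ 1) (hη2 : 0 < η2) (hη2' : η2 < 1)
    (hκef : 0 < κef) (hΔ : 0 < Δk) (hsk : eucNorm sk ≤ Δk)
    (hnH0 : 0 ≤ nH) (hnH : nH ≤ κH)
    (hHop : ∀ v : Fin n → ℝ, eucNorm (Hk.mulVec v) ≤ nH * eucNorm v)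
    (hcauchy : mk 0 - mk sk ≥ c1 * eucNorm gk * min Δk (eucNorm gk / max nH 1))
    (hfl : ∀ s : Fin n → ℝ, eucNorm s ≤ Δk → |mk s - f (xk + s)| ≤ κef * Δk ^ 2)
    (hg : eucNorm gk ≥ max κH 1 * Δk)
    (hΔsmall : Δk ≤ c1 * (1 - η2) * eucNorm gk / (2 * κef)) :
    (f xk - f (xk + sk)) / (mk 0 - mk sk) ≥ η2 := by
  set N := eucNorm gk with hNdef
  set D := mk 0 - mk sk with hDdef
  have hmax1 : (1:ℝ) ≤ max nH 1 := le_max_right _ _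
  have hmaxpos : (0:ℝ) < max nH 1 := lt_of_lt_of_le one_pos hmax1
  have hmaxle : max nH 1 ≤ max κH 1 := max_le_max hnH le_rfl
  have hNbig : max nH 1 * Δk ≤ N := le_trans (by nlinarith) hg
  have hmin : min Δk (N / max nH 1) = Δk := by
    rw [min_eq_left]
    rw [le_div_iff₀ hmaxpos]
    nlinarith
  rw [hmin] at hcauchy
  have hNpos : 0 < N := by nlinarith
  have hD : D ≥ c1 * N * Δk := hcauchy
  have hDpos : 0 < D := by nlinarith [mul_pos hNpos hΔ]
  have hfl' := hfl sk hsk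
  have hmk0 : mk 0 = f xk := by
    simp [hmk, Matrix.mulVec_zero]
  have habs : mk sk - f (xk + sk) ≥ -(κef * Δk ^ 2) := neg_le_of_abs_le hfl'
  have hnum : f xk - f (xk + sk) ≥ D - κef * Δk ^ 2 := by
    have : f xk - f (xk + sk) = D + (mk sk - f (xk + sk)) := by
      rw [hDdef, hmk0]; ring
    rw [this]; linarith
  have hkey : Δk * (2 * κef) ≤ c1 * (1 - η2) * N := by
    have h2κ : (0:ℝ) < 2 * κef := by linarith
    exact (le_div_iff₀ h2κ).mp hΔsmall
  rw [ge_iff_le, le_div_iff₀ hDpos]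
  nlinarith [mul_le_mul_of_nonneg_right hkey hΔ.le,
    mul_le_mul_of_nonneg_left hD (by linarith : (0:ℝ) ≤ 1 - η2)]
end

section
/- Combining the Gauss–Markov bound with strong Λ-poisedness: if additionally 1/σ_min(Ŵ) ≤ θ(n+1)Λ/√(p+1) for constants θ > 0, Λ ≥ 1 (strong Λ-poisedness of the scaled set Ŵ = W·diag(1, Δ^{-1} I_n)), then the operator norm of the error covariance of the regression estimator satisfies ‖Cov‖ ≤ σ² max(1, Δ^{-2}) θ² (n+1)² Λ² / (N(p+1)). In particular, the bound is inversely proportional to N(p+1), the total number of function evaluations. -/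
open Matrix

/-- Euclidean norm of a finite real vector. -/
noncomputable def vecEnorm {k : ℕ} (v : Fin k → ℝ) : ℝ := Real.sqrt (∑ i, v i ^ 2)

lemma enorm_nonneg' {k : ℕ} (v : Fin k → ℝ) : 0 ≤ vecEnorm v := Real.sqrt_nonneg _

lemma enorm_sq' {k : ℕ} (v : Fin k → ℝ) : vecEnorm v ^ 2 = ∑ i, v i ^ 2 :=
  Real.sq_sqrt (Finset.sum_nonneg fun i _ => sq_nonneg _)

lemma enorm_smul' {k : ℕ} (c : ℝ) (v : Fin k → ℝ) : vecEnorm (c • v) = |c| * vecEnorm v := by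
  unfold vecEnorm
  simp_rw [Pi.smul_apply, smul_eq_mul, mul_pow, ← Finset.mul_sum,
    Real.sqrt_mul (sq_nonneg c), Real.sqrt_sq_eq_abs]

lemma vecEnorm_eq_zero' {k : ℕ} {v : Fin k → ℝ} (h : vecEnorm v = 0) : v = 0 := by
  have hsum : ∑ i, v i ^ 2 = 0 := by
    have h1 : ∑ i, v i ^ 2 ≤ 0 := Real.sqrt_eq_zero'.mp h
    have h2 : 0 ≤ ∑ i, v i ^ 2 := Finset.sum_nonneg fun i _ => sq_nonneg _
    linarith
  funext i
  have := (Finset.sum_eq_zero_iff_of_nonneg (fun i _ => sq_nonneg (v i))).mp hsum i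
    (Finset.mem_univ i)
  exact pow_eq_zero_iff two_ne_zero |>.mp this

lemma enorm_eq_norm' {k : ℕ} (x : EuclideanSpace ℝ (Fin k)) :
    ‖x‖ = vecEnorm (fun i => x i) := by
  simp [EuclideanSpace.norm_eq, Real.norm_eq_abs, sq_abs, vecEnorm]

/-- Diagonal matrices with entries bounded by `m` contract norms by at most `m`. -/
lemma enorm_diag_mulVec {k : ℕ} (d : Fin k → ℝ) (m : ℝ) (hm0 : 0 ≤ m)
    (hm : ∀ i, |d i| ≤ m) (v : Fin k → ℝ) :
    vecEnorm ((Matrix.diagonal d).mulVec v) ≤ m * vecEnorm v := by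
  unfold vecEnorm
  have key : m * Real.sqrt (∑ i, v i ^ 2) = Real.sqrt (m ^ 2 * ∑ i, v i ^ 2) := by
    rw [Real.sqrt_mul (sq_nonneg m), Real.sqrt_sq hm0]
  rw [key]
  apply Real.sqrt_le_sqrt
  rw [Finset.mul_sum]
  apply Finset.sum_le_sum
  intro i _
  rw [Matrix.mulVec_diagonal, mul_pow]
  apply mul_le_mul_of_nonneg_right _ (sq_nonneg _)
  rw [← sq_abs (d i)]
  exact pow_le_pow_left₀ (abs_nonneg _) (hm i) 2

set_option maxHeartbeats 1000000 in
/-- combining the Gauss–Markov covariance `Cov = (σ²/N)(WᵀW)⁻¹` with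
strong Λ-poisedness `1/σ_min(Ŵ) ≤ θ(n+1)Λ/√(p+1)` gives
`‖Cov‖ ≤ σ² max(1, Δ⁻²) θ² (n+1)² Λ² / (N(p+1))` (operator norm stated pointwise). -/
theorem covariance_bound_strong_poisedness
    (n p N : ℕ) (hpn : n ≤ p) (hN : 1 ≤ N)
    (σ θ Λ Δ : ℝ) (hσ : 0 < σ) (hθ : 0 < θ) (hΛ : 1 ≤ Λ) (hΔ : 0 < Δ)
    (W : Matrix (Fin (p + 1)) (Fin (n + 1)) ℝ)
    (hrank : W.rank = n + 1)
    (D : Matrix (Fin (n + 1)) (Fin (n + 1)) ℝ)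
    (hD : D = Matrix.diagonal (Fin.cons 1 (fun _ : Fin n => Δ⁻¹)))
    (What : Matrix (Fin (p + 1)) (Fin (n + 1)) ℝ) (hWhat : What = W * D)
    (smin : ℝ)
    (hsmin : IsGreatest
      {c : ℝ | ∀ v : Fin (n + 1) → ℝ, c * vecEnorm v ≤ vecEnorm (What.mulVec v)} smin)
    (hpoised : 1 / smin ≤ θ * (n + 1) * Λ / Real.sqrt (p + 1)) :
    ∀ v : Fin (n + 1) → ℝ,
      vecEnorm (((σ ^ 2 / N) • (Wᵀ * W)⁻¹).mulVec v) ≤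
        σ ^ 2 * max 1 (Δ⁻¹ ^ 2) * θ ^ 2 * (n + 1) ^ 2 * Λ ^ 2 / (N * (p + 1)) *
          vecEnorm v := by
  intro v
  have hNpos : (0:ℝ) < N := by exact_mod_cast hN
  have hp1 : (0:ℝ) < (p:ℝ) + 1 := by positivity
  set m : ℝ := max 1 Δ⁻¹ with hmdef
  have hm0 : (0:ℝ) ≤ m := le_trans zero_le_one (le_max_left _ _)
  set d : Fin (n+1) → ℝ := Fin.cons 1 (fun _ : Fin n => Δ⁻¹) with hddef
  have hdabs : ∀ i, |d i| ≤ m := by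
    intro i
    refine Fin.cases ?_ ?_ i
    · simp [hddef, hmdef]
    · intro j
      simp only [hddef, Fin.cons_succ]
      rw [abs_of_nonneg (inv_nonneg.2 hΔ.le)]
      exact le_max_right _ _
  -- determinant of D
  have hDdet : IsUnit D.det := by
    rw [hD, Matrix.det_diagonal]
    apply isUnit_iff_ne_zero.2
    apply Finset.prod_ne_zero_iff.2
    intro i _
    refine Fin.cases ?_ ?_ i
    · simp [hddef]
    · intro j; simp [hddef, inv_ne_zero hΔ.ne']
  -- injectivity of W.mulVec
  have hWker : LinearMap.ker W.mulVecLin = ⊥ := by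
    have hrn := LinearMap.finrank_range_add_finrank_ker W.mulVecLin
    rw [Matrix.rank] at hrank
    rw [hrank] at hrn
    have hdom : Module.finrank ℝ (Fin (n+1) → ℝ) = n + 1 := Module.finrank_fin_fun ℝ
    rw [hdom] at hrn
    have h0 : Module.finrank ℝ (LinearMap.ker W.mulVecLin) = 0 := by omega
    exact Submodule.finrank_eq_zero.mp h0
  have hWinj : Function.Injective W.mulVec := by
    have := LinearMap.ker_eq_bot.mp hWker
    exact this
  have hDinj : Function.Injective D.mulVec :=
    Matrix.mulVec_injective_iff_isUnit.2 ((Matrix.isUnit_iff_isUnit_det D).2 hDdet)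
  have hWhatinj : Function.Injective What.mulVec := by
    rw [hWhat]
    intro x y hxy
    apply hDinj
    apply hWinj
    rw [Matrix.mulVec_mulVec, Matrix.mulVec_mulVec]
    exact hxy
  -- positivity of smin via antilipschitz
  have hspos : 0 < smin := by
    set f : EuclideanSpace ℝ (Fin (n+1)) →ₗ[ℝ] EuclideanSpace ℝ (Fin (p+1)) :=
      (WithLp.linearEquiv 2 ℝ (Fin (p+1) → ℝ)).symm.toLinearMap ∘ₗ
        What.mulVecLin ∘ₗ (WithLp.linearEquiv 2 ℝ (Fin (n+1) → ℝ)).toLinearMap with hfdef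
    have hfapp : ∀ x : EuclideanSpace ℝ (Fin (n+1)),
        f x = (WithLp.equiv 2 (Fin (p+1) → ℝ)).symm
          (What.mulVec ((WithLp.equiv 2 (Fin (n+1) → ℝ)) x)) := fun x => rfl
    have hfker : LinearMap.ker f = ⊥ := by
      apply LinearMap.ker_eq_bot.2
      intro x y hxy
      simp only [hfapp] at hxy
      have := hWhatinj ((WithLp.equiv 2 (Fin (p+1) → ℝ)).symm.injective hxy)
      exact (WithLp.equiv 2 (Fin (n+1) → ℝ)).injective this
    obtain ⟨K, hK0, hK⟩ := f.exists_antilipschitzWith hfker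
    have hc : (K:ℝ)⁻¹ ∈ {c : ℝ | ∀ w : Fin (n + 1) → ℝ,
        c * vecEnorm w ≤ vecEnorm (What.mulVec w)} := by
      intro w
      set x : EuclideanSpace ℝ (Fin (n+1)) := (WithLp.equiv 2 (Fin (n+1) → ℝ)).symm w
        with hxdef
      have h1 : ‖x‖ ≤ (K:ℝ) * ‖f x‖ := by
        have := hK.le_mul_dist x 0
        simpa [dist_zero_right, map_zero] using this
      have hnx : ‖x‖ = vecEnorm w := by
        rw [enorm_eq_norm' x]; rfl
      have hnfx : ‖f x‖ = vecEnorm (What.mulVec w) := by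
        rw [hfapp, hxdef, Equiv.apply_symm_apply, enorm_eq_norm']
        rfl
      rw [hnx, hnfx] at h1
      have hKpos : (0:ℝ) < (K:ℝ) := by exact_mod_cast hK0
      rw [inv_mul_le_iff₀ hKpos]
      exact h1
    have : (0:ℝ) < (K:ℝ)⁻¹ := by
      have hKpos : (0:ℝ) < (K:ℝ) := by exact_mod_cast hK0
      positivity
    exact lt_of_lt_of_le this (hsmin.2 hc)
  -- quadratic form identity
  set M : Matrix (Fin (n+1)) (Fin (n+1)) ℝ := Whatᵀ * What with hMdef
  have hquad : ∀ y : Fin (n+1) → ℝ,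
      vecEnorm (What.mulVec y) ^ 2 = y ⬝ᵥ (M.mulVec y) := by
    intro y
    rw [enorm_sq', hMdef, ← Matrix.mulVec_mulVec, Matrix.dotProduct_mulVec,
      Matrix.vecMul_transpose]
    simp [dotProduct, sq]
  -- lower bound for M
  have hMlb : ∀ y : Fin (n+1) → ℝ, smin ^ 2 * vecEnorm y ≤ vecEnorm (M.mulVec y) := by
    intro y
    rcases eq_or_ne (vecEnorm y) 0 with h0 | h0
    · rw [h0, mul_zero]; exact enorm_nonneg' _
    have hy0 : 0 < vecEnorm y := lt_of_le_of_ne (enorm_nonneg' y) (Ne.symm h0)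
    have h1 : smin ^ 2 * vecEnorm y ^ 2 ≤ y ⬝ᵥ (M.mulVec y) := by
      rw [← hquad y]
      have hsy := hsmin.1 y
      have hnn : 0 ≤ smin * vecEnorm y := mul_nonneg hspos.le (enorm_nonneg' y)
      calc smin ^ 2 * vecEnorm y ^ 2 = (smin * vecEnorm y) ^ 2 := by ring
        _ ≤ vecEnorm (What.mulVec y) ^ 2 := pow_le_pow_left₀ hnn hsy 2
    have h2 : y ⬝ᵥ (M.mulVec y) ≤ vecEnorm y * vecEnorm (M.mulVec y) := by
      have := Real.sum_mul_le_sqrt_mul_sqrt Finset.univ y (M.mulVec y)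
      simpa [dotProduct, vecEnorm] using this
    nlinarith [le_trans h1 h2, hy0, enorm_nonneg' (M.mulVec y)]
  -- M invertible
  have hMinj : Function.Injective M.mulVec := by
    intro x y hxy
    have hz : M.mulVec (x - y) = 0 := by
      have : M.mulVec x - M.mulVec y = 0 := by rw [hxy]; ring
      rw [← this]
      simp [Matrix.mulVec_sub]
    have := hMlb (x - y)
    rw [hz] at this
    have he0 : vecEnorm (0 : Fin (n+1) → ℝ) = 0 := by simp [vecEnorm]
    rw [he0] at this
    have hs2 : 0 < smin ^ 2 := by positivity
    have : vecEnorm (x - y) ≤ 0 := by nlinarith [enorm_nonneg' (x - y)]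
    have : vecEnorm (x - y) = 0 := le_antisymm this (enorm_nonneg' _)
    have := vecEnorm_eq_zero' this
    exact sub_eq_zero.mp this
  have hMdet : IsUnit M.det :=
    (Matrix.isUnit_iff_isUnit_det M).1 (Matrix.mulVec_injective_iff_isUnit.1 hMinj)
  -- A = WᵀW and its inverse
  have hDT : Dᵀ = D := by rw [hD]; exact Matrix.diagonal_transpose _
  have hMeq : M = D * (Wᵀ * W) * D := by
    rw [hMdef, hWhat, Matrix.transpose_mul, hDT]
    simp only [Matrix.mul_assoc]
  have hA : Wᵀ * W = D⁻¹ * M * D⁻¹ := by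
    rw [hMeq]
    rw [show D * (Wᵀ * W) * D = D * ((Wᵀ * W) * D) from Matrix.mul_assoc _ _ _,
      ← Matrix.mul_assoc D⁻¹ D, Matrix.nonsing_inv_mul D hDdet, Matrix.one_mul,
      Matrix.mul_assoc, Matrix.mul_nonsing_inv D hDdet, Matrix.mul_one]
  have hAinv : (Wᵀ * W)⁻¹ = D * (M⁻¹ * D) := by
    rw [hA, Matrix.mul_inv_rev, Matrix.mul_inv_rev,
      Matrix.nonsing_inv_nonsing_inv D hDdet]
  -- upper bound for M⁻¹
  have hs2 : (0:ℝ) < smin ^ 2 := by positivity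
  have hMub : ∀ x : Fin (n+1) → ℝ,
      vecEnorm (M⁻¹.mulVec x) ≤ (smin ^ 2)⁻¹ * vecEnorm x := by
    intro x
    have h := hMlb (M⁻¹.mulVec x)
    rw [Matrix.mulVec_mulVec, Matrix.mul_nonsing_inv M hMdet, Matrix.one_mulVec] at h
    calc vecEnorm (M⁻¹.mulVec x) = (smin ^ 2)⁻¹ * (smin ^ 2 * vecEnorm (M⁻¹.mulVec x)) := by
          field_simp
      _ ≤ (smin ^ 2)⁻¹ * vecEnorm x := by
          apply mul_le_mul_of_nonneg_left h (by positivity)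
  -- diagonal bound
  have hdiag : ∀ x : Fin (n+1) → ℝ, vecEnorm (D.mulVec x) ≤ m * vecEnorm x := by
    intro x
    rw [hD]
    exact enorm_diag_mulVec _ m hm0 hdabs x
  -- main chain
  have hstep : vecEnorm ((Wᵀ * W)⁻¹.mulVec v) ≤ m * ((smin ^ 2)⁻¹ * (m * vecEnorm v)) := by
    have hsplit : (Wᵀ * W)⁻¹.mulVec v = D.mulVec (M⁻¹.mulVec (D.mulVec v)) := by
      rw [hAinv, Matrix.mulVec_mulVec, Matrix.mulVec_mulVec, Matrix.mul_assoc]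
    rw [hsplit]
    calc vecEnorm (D.mulVec (M⁻¹.mulVec (D.mulVec v)))
        ≤ m * vecEnorm (M⁻¹.mulVec (D.mulVec v)) := hdiag _
      _ ≤ m * ((smin ^ 2)⁻¹ * vecEnorm (D.mulVec v)) :=
          mul_le_mul_of_nonneg_left (hMub _) hm0
      _ ≤ m * ((smin ^ 2)⁻¹ * (m * vecEnorm v)) := by
          apply mul_le_mul_of_nonneg_left _ hm0
          exact mul_le_mul_of_nonneg_left (hdiag v) (by positivity)
  -- bound on (smin^2)⁻¹
  have hsinv : smin⁻¹ ≤ θ * ((n:ℝ) + 1) * Λ / Real.sqrt ((p:ℝ) + 1) := by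
    rw [← one_div]
    exact_mod_cast hpoised
  have hsq : (smin ^ 2)⁻¹ ≤ θ ^ 2 * ((n:ℝ) + 1) ^ 2 * Λ ^ 2 / ((p:ℝ) + 1) := by
    have h1 : (smin ^ 2)⁻¹ = (smin⁻¹) ^ 2 := by rw [inv_pow]
    have h2 : (smin⁻¹) ^ 2 ≤ (θ * ((n:ℝ) + 1) * Λ / Real.sqrt ((p:ℝ) + 1)) ^ 2 :=
      pow_le_pow_left₀ (inv_nonneg.2 hspos.le) hsinv 2
    rw [h1]
    refine h2.trans (le_of_eq ?_)
    rw [div_pow, Real.sq_sqrt hp1.le]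
    ring
  -- max identity
  have hmm : m * m = max 1 (Δ⁻¹ ^ 2) := by
    rw [← sq, hmdef]
    rcases le_total (1:ℝ) Δ⁻¹ with h | h
    · rw [max_eq_right h, max_eq_right (by nlinarith : (1:ℝ) ≤ Δ⁻¹ ^ 2)]
    · have hi : (0:ℝ) ≤ Δ⁻¹ := inv_nonneg.2 hΔ.le
      rw [max_eq_left h, max_eq_left (by nlinarith : Δ⁻¹ ^ 2 ≤ (1:ℝ))]
      norm_num
  -- finish
  have hcN : |σ ^ 2 / (N:ℝ)| = σ ^ 2 / (N:ℝ) := abs_of_nonneg (by positivity)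
  rw [Matrix.smul_mulVec, enorm_smul', hcN]
  have hmax0 : (0:ℝ) ≤ max 1 (Δ⁻¹ ^ 2) := le_trans zero_le_one (le_max_left _ _)
  calc σ ^ 2 / (N:ℝ) * vecEnorm ((Wᵀ * W)⁻¹.mulVec v)
      ≤ σ ^ 2 / (N:ℝ) * (m * ((smin ^ 2)⁻¹ * (m * vecEnorm v))) :=
        mul_le_mul_of_nonneg_left hstep (by positivity)
    _ = σ ^ 2 / (N:ℝ) * (m * m) * ((smin ^ 2)⁻¹ * vecEnorm v) := by ring
    _ = σ ^ 2 / (N:ℝ) * max 1 (Δ⁻¹ ^ 2) * ((smin ^ 2)⁻¹ * vecEnorm v) := by rw [hmm]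
    _ ≤ σ ^ 2 / (N:ℝ) * max 1 (Δ⁻¹ ^ 2) *
        ((θ ^ 2 * ((n:ℝ) + 1) ^ 2 * Λ ^ 2 / ((p:ℝ) + 1)) * vecEnorm v) := by
        apply mul_le_mul_of_nonneg_left _ (by positivity)
        exact mul_le_mul_of_nonneg_right hsq (enorm_nonneg' v)
    _ = σ ^ 2 * max 1 (Δ⁻¹ ^ 2) * θ ^ 2 * ((n:ℝ) + 1) ^ 2 * Λ ^ 2 /
          ((N:ℝ) * ((p:ℝ) + 1)) * vecEnorm v := by
        field_simp
end
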